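/- For every complex number q with |q| < 1, the function 𝒫 satisfies the differential equation q·𝒫′(q) = (𝒫(q)² − 𝒬(q))/4, where ′ denotes the complex derivative with respect to q. -/

import Mathlib

open Complex

/-- The normalized Eisenstein series `𝒫(q) = 1 + 8 ∑_{n≥1} (-1)^{n-1} n qⁿ/(1-qⁿ)`. -/
noncomputable def mP (q : ℂ) : ℂ :=
  1 + 8 * ∑' n : ℕ, (-1) ^ n * ((n : ℂ) + 1) * q ^ (n + 1) / (1 - q ^ (n + 1))

/-- The normalized Eisenstein series `e(q) = 1 + 24 ∑_{n≥1} n qⁿ/(1+qⁿ)`. -/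
noncomputable def ee (q : ℂ) : ℂ :=
  1 + 24 * ∑' n : ℕ, ((n : ℂ) + 1) * q ^ (n + 1) / (1 + q ^ (n + 1))

/-- The normalized Eisenstein series `𝒬(q) = 1 - 16 ∑_{n≥1} (-1)^{n-1} n³ qⁿ/(1-qⁿ)`. -/
noncomputable def mQ (q : ℂ) : ℂ :=
  1 - 16 * ∑' n : ℕ, (-1) ^ n * ((n : ℂ) + 1) ^ 3 * q ^ (n + 1) / (1 - q ^ (n + 1))

noncomputable def Pg (q : ℂ) (k : ℕ) : ℂ := q ^ k / (1 - q ^ k)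

noncomputable def W0 (m n : ℕ) : ℂ := (-1) ^ (m + n) * ((m : ℂ) + 1) * ((n : ℂ) + 1)

noncomputable def WA (m n : ℕ) : ℂ :=
  (-1) ^ (m + 1) * ((m : ℂ) + 1) ^ 2 + (-1) ^ (n + 1) * ((n : ℂ) + 1) ^ 2
    + (-1) ^ (m + n) * ((m : ℂ) + (n : ℂ) + 2) ^ 2

lemma norm_pow_lt {q : ℂ} (hq : ‖q‖ < 1) {k : ℕ} (hk : k ≠ 0) : ‖q ^ k‖ < 1 := by
  rw [norm_pow]; exact pow_lt_one₀ (norm_nonneg q) hq hk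

lemma one_sub_pow_ne {q : ℂ} (hq : ‖q‖ < 1) {k : ℕ} (hk : k ≠ 0) : 1 - q ^ k ≠ 0 := by
  intro h
  have h2 : q ^ k = 1 := by linear_combination -h
  have h3 := norm_pow_lt hq hk
  rw [h2, norm_one] at h3
  exact lt_irrefl _ h3

lemma norm_one_sub_pow_ge {q : ℂ} (hq : ‖q‖ < 1) {k : ℕ} (hk : k ≠ 0) :
    1 - ‖q‖ ≤ ‖1 - q ^ k‖ := by
  have h1 : ‖q ^ k‖ ≤ ‖q‖ := by
    rw [norm_pow]; exact pow_le_of_le_one (norm_nonneg q) hq.le hk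
  calc 1 - ‖q‖ ≤ ‖(1 : ℂ)‖ - ‖q ^ k‖ := by rw [norm_one]; linarith
  _ ≤ ‖1 - q ^ k‖ := norm_sub_norm_le _ _

lemma norm_Pg_le {q : ℂ} (hq : ‖q‖ < 1) {k : ℕ} (hk : k ≠ 0) :
    ‖Pg q k‖ ≤ ‖q‖ ^ k * (1 - ‖q‖)⁻¹ := by
  have h0 : (0:ℝ) < 1 - ‖q‖ := by linarith
  have h1 := norm_one_sub_pow_ge hq hk
  rw [Pg, norm_div, norm_pow, ← div_eq_mul_inv]
  gcongr

lemma Pg_mul {q : ℂ} (hq : ‖q‖ < 1) (a b : ℕ) :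
    Pg q (a + 1) * Pg q (b + 1) = Pg q (a + b + 2) * (1 + Pg q (a + 1) + Pg q (b + 1)) := by
  have h1 := one_sub_pow_ne hq (Nat.succ_ne_zero a)
  have h2 := one_sub_pow_ne hq (Nat.succ_ne_zero b)
  have h3 := one_sub_pow_ne hq (k := a + b + 2) (by omega)
  rw [Pg, Pg, Pg]
  field_simp
  ring

lemma Pg_sq {q : ℂ} (hq : ‖q‖ < 1) {k : ℕ} (hk : k ≠ 0) :
    Pg q k + Pg q k ^ 2 = q ^ k / (1 - q ^ k) ^ 2 := by
  have h1 := one_sub_pow_ne hq hk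
  rw [Pg]
  field_simp
  ring

lemma summable_aux1 {q : ℂ} (hq : ‖q‖ < 1) (a : ℕ) :
    Summable (fun n : ℕ => ((n : ℝ) + 1) ^ a * ‖q‖ ^ (n + 1)) := by
  have h : ‖(‖q‖ : ℝ)‖ < 1 := by rwa [Real.norm_eq_abs, _root_.abs_of_nonneg (norm_nonneg q)]
  have h2 := (summable_pow_mul_geometric_of_norm_lt_one a h).comp_injective Nat.succ_injective
  exact h2.congr fun n => by
    simp only [Function.comp, Nat.succ_eq_add_one]
    push_cast
    ring

lemma summable_aux2 {q : ℂ} (hq : ‖q‖ < 1) (a b : ℕ) :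
    Summable (fun p : ℕ × ℕ =>
      (((p.1 : ℝ) + 1) ^ a * ‖q‖ ^ (p.1 + 1)) * (((p.2 : ℝ) + 1) ^ b * ‖q‖ ^ (p.2 + 1))) := by
  exact Summable.mul_of_nonneg (f := fun n : ℕ => ((n : ℝ) + 1) ^ a * ‖q‖ ^ (n + 1))
    (g := fun n : ℕ => ((n : ℝ) + 1) ^ b * ‖q‖ ^ (n + 1)) (summable_aux1 hq a)
    (summable_aux1 hq b) (fun n => by positivity) (fun n => by positivity)

lemma summable_PP {q : ℂ} (hq : ‖q‖ < 1) (w : ℕ → ℕ → ℂ) (a b : ℕ) (C : ℝ)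
    (hC : 0 ≤ C)
    (hw : ∀ m n, ‖w m n‖ ≤ C * (((m : ℝ) + 1) ^ a * ((n : ℝ) + 1) ^ b))
    (e₁ e₂ : ℕ × ℕ → ℕ) (he₁ : ∀ p, e₁ p ≠ 0) (he₂ : ∀ p, e₂ p ≠ 0)
    (he : ∀ p : ℕ × ℕ, p.1 + p.2 + 2 ≤ e₁ p + e₂ p) :
    Summable (fun p : ℕ × ℕ => ‖w p.1 p.2 * Pg q (e₁ p) * Pg q (e₂ p)‖) := by
  have h0 : (0:ℝ) < 1 - ‖q‖ := by linarith
  refine Summable.of_nonneg_of_le (fun p => norm_nonneg _) ?_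
    ((summable_aux2 hq a b).mul_left (C * ((1 - ‖q‖)⁻¹ * (1 - ‖q‖)⁻¹)))
  intro p
  have h1 := norm_Pg_le hq (he₁ p)
  have h2 := norm_Pg_le hq (he₂ p)
  have hw' := hw p.1 p.2
  have hr : ‖q‖ ^ (e₁ p) * ‖q‖ ^ (e₂ p) ≤ ‖q‖ ^ (p.1 + 1) * ‖q‖ ^ (p.2 + 1) := by
    have hee := he p
    rw [← pow_add, ← pow_add]
    exact pow_le_pow_of_le_one (norm_nonneg q) hq.le (by omega)
  calc ‖w p.1 p.2 * Pg q (e₁ p) * Pg q (e₂ p)‖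
      = ‖w p.1 p.2‖ * ‖Pg q (e₁ p)‖ * ‖Pg q (e₂ p)‖ := by rw [norm_mul, norm_mul]
    _ ≤ (C * (((p.1 : ℝ) + 1) ^ a * ((p.2 : ℝ) + 1) ^ b)) * (‖q‖ ^ (e₁ p) * (1 - ‖q‖)⁻¹)
        * (‖q‖ ^ (e₂ p) * (1 - ‖q‖)⁻¹) := by
        gcongr <;> first | exact hw' | exact hc k | exact h1 | exact h2 | exact norm_nonneg _ | positivity
    _ = (C * (((p.1 : ℝ) + 1) ^ a * ((p.2 : ℝ) + 1) ^ b) * ((1 - ‖q‖)⁻¹ * (1 - ‖q‖)⁻¹))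
        * (‖q‖ ^ (e₁ p) * ‖q‖ ^ (e₂ p)) := by ring
    _ ≤ (C * (((p.1 : ℝ) + 1) ^ a * ((p.2 : ℝ) + 1) ^ b) * ((1 - ‖q‖)⁻¹ * (1 - ‖q‖)⁻¹))
        * (‖q‖ ^ (p.1 + 1) * ‖q‖ ^ (p.2 + 1)) := by
        apply mul_le_mul_of_nonneg_left hr (by positivity)
    _ = (C * ((1 - ‖q‖)⁻¹ * (1 - ‖q‖)⁻¹)) *
        ((((p.1 : ℝ) + 1) ^ a * ‖q‖ ^ (p.1 + 1)) * (((p.2 : ℝ) + 1) ^ b * ‖q‖ ^ (p.2 + 1))) := by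
        ring

lemma summable_Ps {q : ℂ} (hq : ‖q‖ < 1) (w : ℕ → ℕ → ℂ) (a b : ℕ) (C : ℝ)
    (hC : 0 ≤ C)
    (hw : ∀ m n, ‖w m n‖ ≤ C * (((m : ℝ) + 1) ^ a * ((n : ℝ) + 1) ^ b))
    (e : ℕ × ℕ → ℕ) (he₀ : ∀ p, e p ≠ 0)
    (he : ∀ p : ℕ × ℕ, p.1 + p.2 + 2 ≤ e p) :
    Summable (fun p : ℕ × ℕ => ‖w p.1 p.2 * Pg q (e p)‖) := by
  have h0 : (0:ℝ) < 1 - ‖q‖ := by linarith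
  refine Summable.of_nonneg_of_le (fun p => norm_nonneg _) ?_
    ((summable_aux2 hq a b).mul_left (C * (1 - ‖q‖)⁻¹))
  intro p
  have h1 := norm_Pg_le hq (he₀ p)
  have hw' := hw p.1 p.2
  have hr : ‖q‖ ^ (e p) ≤ ‖q‖ ^ (p.1 + 1) * ‖q‖ ^ (p.2 + 1) := by
    have hee := he p
    rw [← pow_add]
    exact pow_le_pow_of_le_one (norm_nonneg q) hq.le (by omega)
  calc ‖w p.1 p.2 * Pg q (e p)‖ = ‖w p.1 p.2‖ * ‖Pg q (e p)‖ := by rw [norm_mul]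
    _ ≤ (C * (((p.1 : ℝ) + 1) ^ a * ((p.2 : ℝ) + 1) ^ b)) * (‖q‖ ^ (e p) * (1 - ‖q‖)⁻¹) := by
        gcongr <;> first | exact hw' | exact hc k | exact h1 | exact h2 | exact norm_nonneg _ | positivity
    _ = (C * (((p.1 : ℝ) + 1) ^ a * ((p.2 : ℝ) + 1) ^ b) * (1 - ‖q‖)⁻¹) * ‖q‖ ^ (e p) := by ring
    _ ≤ (C * (((p.1 : ℝ) + 1) ^ a * ((p.2 : ℝ) + 1) ^ b) * (1 - ‖q‖)⁻¹)
        * (‖q‖ ^ (p.1 + 1) * ‖q‖ ^ (p.2 + 1)) := by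
        apply mul_le_mul_of_nonneg_left hr (by positivity)
    _ = (C * (1 - ‖q‖)⁻¹) *
        ((((p.1 : ℝ) + 1) ^ a * ‖q‖ ^ (p.1 + 1)) * (((p.2 : ℝ) + 1) ^ b * ‖q‖ ^ (p.2 + 1))) := by
        ring

lemma summable_cP {q : ℂ} (hq : ‖q‖ < 1) (c : ℕ → ℂ) (a : ℕ) (C : ℝ)
    (hC : 0 ≤ C)
    (hc : ∀ k, ‖c k‖ ≤ C * ((k : ℝ) + 1) ^ a) (e : ℕ → ℕ) (he₀ : ∀ k, e k ≠ 0)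
    (he : ∀ k, k + 1 ≤ e k) :
    Summable (fun k : ℕ => ‖c k * Pg q (e k)‖) := by
  have h0 : (0:ℝ) < 1 - ‖q‖ := by linarith
  refine Summable.of_nonneg_of_le (fun p => norm_nonneg _) ?_
    ((summable_aux1 hq a).mul_left (C * (1 - ‖q‖)⁻¹))
  intro k
  have h1 := norm_Pg_le hq (he₀ k)
  have hr : ‖q‖ ^ (e k) ≤ ‖q‖ ^ (k + 1) :=
    pow_le_pow_of_le_one (norm_nonneg q) hq.le (he k)
  calc ‖c k * Pg q (e k)‖ = ‖c k‖ * ‖Pg q (e k)‖ := by rw [norm_mul]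
    _ ≤ (C * ((k : ℝ) + 1) ^ a) * (‖q‖ ^ (e k) * (1 - ‖q‖)⁻¹) := by
        gcongr <;> first | exact hw' | exact hc k | exact h1 | exact h2 | exact norm_nonneg _ | positivity
    _ = (C * ((k : ℝ) + 1) ^ a * (1 - ‖q‖)⁻¹) * ‖q‖ ^ (e k) := by ring
    _ ≤ (C * ((k : ℝ) + 1) ^ a * (1 - ‖q‖)⁻¹) * ‖q‖ ^ (k + 1) := by
        apply mul_le_mul_of_nonneg_left hr (by positivity)
    _ = (C * (1 - ‖q‖)⁻¹) * (((k : ℝ) + 1) ^ a * ‖q‖ ^ (k + 1)) := by ring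

lemma summable_cPP {q : ℂ} (hq : ‖q‖ < 1) (c : ℕ → ℂ) (a : ℕ) (C : ℝ)
    (hC : 0 ≤ C)
    (hc : ∀ k, ‖c k‖ ≤ C * ((k : ℝ) + 1) ^ a) :
    Summable (fun k : ℕ => ‖c k * Pg q (k + 1) ^ 2‖) := by
  have h0 : (0:ℝ) < 1 - ‖q‖ := by linarith
  refine Summable.of_nonneg_of_le (fun p => norm_nonneg _) ?_
    ((summable_aux1 hq a).mul_left (C * ((1 - ‖q‖)⁻¹ * (1 - ‖q‖)⁻¹)))
  intro k
  have h1 := norm_Pg_le hq (Nat.succ_ne_zero k)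
  have hP0 : (0:ℝ) ≤ ‖q‖ ^ (k+1) * (1 - ‖q‖)⁻¹ := by positivity
  have hr : ‖q‖ ^ (k + 1) * ‖q‖ ^ (k + 1) ≤ 1 * ‖q‖ ^ (k + 1) := by
    apply mul_le_mul_of_nonneg_right _ (by positivity)
    exact pow_le_one₀ (norm_nonneg q) hq.le
  calc ‖c k * Pg q (k + 1) ^ 2‖ = ‖c k‖ * (‖Pg q (k + 1)‖ * ‖Pg q (k + 1)‖) := by
        rw [norm_mul, sq, norm_mul]
    _ ≤ (C * ((k : ℝ) + 1) ^ a) * ((‖q‖ ^ (k+1) * (1 - ‖q‖)⁻¹) * (‖q‖ ^ (k+1) * (1 - ‖q‖)⁻¹)) := by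
        gcongr <;> first | exact hw' | exact hc k | exact h1 | exact h2 | exact norm_nonneg _ | positivity
    _ = (C * ((k : ℝ) + 1) ^ a * ((1 - ‖q‖)⁻¹ * (1 - ‖q‖)⁻¹)) * (‖q‖ ^ (k+1) * ‖q‖ ^ (k+1)) := by
        ring
    _ ≤ (C * ((k : ℝ) + 1) ^ a * ((1 - ‖q‖)⁻¹ * (1 - ‖q‖)⁻¹)) * (1 * ‖q‖ ^ (k+1)) := by
        apply mul_le_mul_of_nonneg_left hr (by positivity)
    _ = (C * ((1 - ‖q‖)⁻¹ * (1 - ‖q‖)⁻¹)) * (((k : ℝ) + 1) ^ a * ‖q‖ ^ (k + 1)) := by ring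

lemma pow_neg_one_sq_nat (n : ℕ) : (-1 : ℂ) ^ n * (-1) ^ n = 1 := by
  rw [← pow_add, ← two_mul, pow_mul]
  norm_num

lemma W0_symm (a b : ℕ) : W0 a b = W0 b a := by
  simp only [W0]
  rw [Nat.add_comm a b]
  ring

lemma WA_symm (a b : ℕ) : WA a b = WA b a := by
  simp only [WA]
  rw [Nat.add_comm a b]
  ring

lemma WA_key (d n : ℕ) : WA (n + d + 1) n - WA n d = 4 * W0 (n + d + 1) n := by
  simp only [WA, W0, pow_add, pow_one]
  push_cast
  have hx := pow_neg_one_sq_nat n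
  linear_combination ((-1 : ℂ) ^ d * (4 * ((n : ℂ) + (d : ℂ) + 2) * ((n : ℂ) + 1)
    - (2 * (n : ℂ) + (d : ℂ) + 3) ^ 2)) * hx

lemma W_diag (k : ℕ) : 4 * W0 k k - WA k k = 2 * (-1) ^ k * ((k : ℂ) + 1) ^ 2 := by
  simp only [W0, WA, pow_add, pow_one]
  ring

lemma sq_alt_sum (s : ℕ) :
    ∑ i ∈ Finset.range (s + 1), (-1 : ℂ) ^ (i + 1) * ((i : ℂ) + 1) ^ 2
      = (-1) ^ (s + 1) * ((s : ℂ) + 1) * ((s : ℂ) + 2) / 2 := by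
  induction s with
  | zero => norm_num
  | succ n ih =>
    rw [Finset.sum_range_succ, ih]
    push_cast
    simp only [pow_succ]
    ring

lemma WA_row (s : ℕ) :
    ∑ i ∈ Finset.range (s + 1), WA i (s - i) = (-1) ^ s * ((s : ℂ) + 1) ^ 2 * ((s : ℂ) + 2) := by
  simp only [WA]
  rw [Finset.sum_add_distrib, Finset.sum_add_distrib]
  have h2 : ∑ i ∈ Finset.range (s + 1), (-1 : ℂ) ^ (s - i + 1) * (((s - i : ℕ) : ℂ) + 1) ^ 2
      = ∑ i ∈ Finset.range (s + 1), (-1 : ℂ) ^ (i + 1) * ((i : ℂ) + 1) ^ 2 := by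
    have := Finset.sum_range_reflect (fun j => (-1 : ℂ) ^ (j + 1) * ((j : ℂ) + 1) ^ 2) (s + 1)
    rw [← this]
    apply Finset.sum_congr rfl
    intro i hi
    have hi' : i ≤ s := by simpa [Nat.lt_succ_iff] using hi
    congr 2 <;> omega
  have h3 : ∑ i ∈ Finset.range (s + 1), (-1 : ℂ) ^ (i + (s - i)) * ((i : ℂ) + ((s - i : ℕ) : ℂ) + 2) ^ 2
      = (((s : ℕ) : ℂ) + 1) * ((-1) ^ s * ((s : ℂ) + 2) ^ 2) := by
    rw [Finset.sum_congr rfl (g := fun _ => (-1 : ℂ) ^ s * ((s : ℂ) + 2) ^ 2) ?_]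
    · rw [Finset.sum_const, Finset.card_range, nsmul_eq_mul]
      push_cast
      ring
    · intro i hi
      have hi' : i ≤ s := by simpa [Nat.lt_succ_iff] using hi
      rw [show i + (s - i) = s by omega, Nat.cast_sub hi']
      ring_nf
  rw [h2, h3, sq_alt_sum]
  push_cast
  simp only [pow_succ]
  ring

lemma tsum_trichotomy {F : ℕ × ℕ → ℂ} (hF : Summable F) :
    ∑' p : ℕ × ℕ, F p
      = (∑' p : ℕ × ℕ, F (p.1 + p.2 + 1, p.2)) + (∑' p : ℕ × ℕ, F (p.1, p.1 + p.2 + 1))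
        + ∑' k : ℕ, F (k, k) := by
  classical
  have hFn : Summable fun p => ‖F p‖ := summable_norm_iff.mpr hF
  set G₁ : ℕ × ℕ → ℂ := fun p => if p.2 < p.1 then F p else 0 with hG₁
  set G₂ : ℕ × ℕ → ℂ := fun p => if p.1 < p.2 then F p else 0 with hG₂
  set G₃ : ℕ × ℕ → ℂ := fun p => if p.1 = p.2 then F p else 0 with hG₃
  have sG₁ : Summable G₁ := by
    apply Summable.of_norm_bounded hFn
    intro p
    by_cases h : p.2 < p.1 <;> simp [hG₁, h]
  have sG₂ : Summable G₂ := by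
    apply Summable.of_norm_bounded hFn
    intro p
    by_cases h : p.1 < p.2 <;> simp [hG₂, h]
  have sG₃ : Summable G₃ := by
    apply Summable.of_norm_bounded hFn
    intro p
    by_cases h : p.1 = p.2 <;> simp [hG₃, h]
  have hsplit : ∀ p : ℕ × ℕ, F p = G₁ p + G₂ p + G₃ p := by
    intro p
    simp only [hG₁, hG₂, hG₃]
    rcases lt_trichotomy p.1 p.2 with h | h | h
    · rw [if_neg (by omega), if_pos h, if_neg (by omega)]; ring
    · rw [if_neg (by omega), if_neg (by omega), if_pos h]; ring
    · rw [if_pos h, if_neg (by omega), if_neg (by omega)]; ring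
  have e₁ : ∑' p : ℕ × ℕ, F (p.1 + p.2 + 1, p.2) = ∑' p, G₁ p := by
    have hinj : Function.Injective (fun p : ℕ × ℕ => (p.1 + p.2 + 1, p.2)) := by
      intro p p' h
      simp only [Prod.mk.injEq] at h
      have := h.1; have := h.2
      ext <;> omega
    have hsupp : Function.support G₁ ⊆ Set.range (fun p : ℕ × ℕ => (p.1 + p.2 + 1, p.2)) := by
      intro x hx
      have h : x.2 < x.1 := by
        by_contra h
        simp [hG₁, if_neg h] at hx
      exact ⟨(x.1 - x.2 - 1, x.2), Prod.ext (show x.1 - x.2 - 1 + x.2 + 1 = x.1 by omega) rfl⟩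
    rw [← hinj.tsum_eq hsupp]
    exact tsum_congr fun p => by simp [hG₁, if_pos (show p.2 < p.1 + p.2 + 1 by omega)]
  have e₂ : ∑' p : ℕ × ℕ, F (p.1, p.1 + p.2 + 1) = ∑' p, G₂ p := by
    have hinj : Function.Injective (fun p : ℕ × ℕ => (p.1, p.1 + p.2 + 1)) := by
      intro p p' h
      simp only [Prod.mk.injEq] at h
      have := h.1; have := h.2
      ext <;> omega
    have hsupp : Function.support G₂ ⊆ Set.range (fun p : ℕ × ℕ => (p.1, p.1 + p.2 + 1)) := by
      intro x hx
      have h : x.1 < x.2 := by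
        by_contra h
        simp [hG₂, if_neg h] at hx
      exact ⟨(x.1, x.2 - x.1 - 1), Prod.ext rfl (show x.1 + (x.2 - x.1 - 1) + 1 = x.2 by omega)⟩
    rw [← hinj.tsum_eq hsupp]
    exact tsum_congr fun p => by simp [hG₂, if_pos (show p.1 < p.1 + p.2 + 1 by omega)]
  have e₃ : ∑' k : ℕ, F (k, k) = ∑' p, G₃ p := by
    have hinj : Function.Injective (fun k : ℕ => ((k, k) : ℕ × ℕ)) := by
      intro p p' h
      simp only [Prod.mk.injEq] at h
      exact h.1
    have hsupp : Function.support G₃ ⊆ Set.range (fun k : ℕ => ((k, k) : ℕ × ℕ)) := by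
      intro x hx
      have h : x.1 = x.2 := by
        by_contra h
        simp [hG₃, if_neg h] at hx
      exact ⟨x.1, Prod.ext rfl h⟩
    rw [← hinj.tsum_eq hsupp]
    exact tsum_congr fun k => by simp [hG₃]
  calc ∑' p : ℕ × ℕ, F p = ∑' p, (G₁ p + G₂ p + G₃ p) := tsum_congr hsplit
    _ = (∑' p, G₁ p) + (∑' p, G₂ p) + ∑' p, G₃ p := by
        rw [Summable.tsum_add (sG₁.add sG₂) sG₃, Summable.tsum_add sG₁ sG₂]
    _ = _ := by rw [e₁, e₂, e₃]

def sigmaEquiv : (Σ s : ℕ, Fin (s + 1)) ≃ ℕ × ℕ where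
  toFun x := (x.2.1, x.1 - x.2.1)
  invFun p := ⟨p.1 + p.2, ⟨p.1, by omega⟩⟩
  left_inv := by
    rintro ⟨s, ⟨i, hi⟩⟩
    have h : i + (s - i) = s := by omega
    apply Sigma.ext
    · exact h
    · exact (Fin.heq_ext_iff (show i + (s - i) + 1 = s + 1 by omega)).mpr rfl
  right_inv := by
    rintro ⟨a, b⟩
    exact Prod.ext rfl (show a + b - a = b by omega)

lemma tsum_group {F : ℕ × ℕ → ℂ} (hF : Summable F) :
    ∑' p : ℕ × ℕ, F p = ∑' s : ℕ, ∑ i ∈ Finset.range (s + 1), F (i, s - i) := by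
  have hs : Summable fun c : (Σ s : ℕ, Fin (s + 1)) => F (sigmaEquiv c) :=
    hF.comp_injective sigmaEquiv.injective
  rw [← sigmaEquiv.tsum_eq F, Summable.tsum_sigma hs]
  congr 1
  funext s
  rw [tsum_fintype]
  exact Fin.sum_univ_eq_sum_range (fun i => F (i, s - i)) (s + 1)

lemma norm_nat_add_one (m : ℕ) : ‖(m : ℂ) + 1‖ = (m : ℝ) + 1 := by
  rw [show ((m : ℂ) + 1) = ((m + 1 : ℕ) : ℂ) by push_cast; ring, Complex.norm_natCast]
  push_cast; ring

lemma norm_neg_one_pow (k : ℕ) : ‖(-1 : ℂ) ^ k‖ = 1 := by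
  rw [norm_pow, norm_neg, norm_one, one_pow]

lemma norm_W0 (m n : ℕ) : ‖W0 m n‖ = ((m : ℝ) + 1) * ((n : ℝ) + 1) := by
  rw [W0, norm_mul, norm_mul, norm_neg_one_pow, norm_nat_add_one, norm_nat_add_one, one_mul]

lemma norm_W0_le : ∀ m n : ℕ, ‖W0 m n‖ ≤ 1 * (((m : ℝ) + 1) ^ 1 * ((n : ℝ) + 1) ^ 1) := by
  intro m n
  rw [norm_W0]
  nlinarith [Nat.cast_nonneg (α := ℝ) m, Nat.cast_nonneg (α := ℝ) n]

lemma norm_WA_tri (m n : ℕ) :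
    ‖WA m n‖ ≤ ((m : ℝ) + 1) ^ 2 + ((n : ℝ) + 1) ^ 2 + ((m : ℝ) + (n : ℝ) + 2) ^ 2 := by
  have h3 : ‖(m : ℂ) + (n : ℂ) + 2‖ = (m : ℝ) + (n : ℝ) + 2 := by
    rw [show ((m : ℂ) + (n : ℂ) + 2) = ((m + n + 2 : ℕ) : ℂ) by push_cast; ring,
      Complex.norm_natCast]
    push_cast; ring
  rw [WA]
  refine (norm_add_le _ _).trans ?_
  gcongr
  · refine (norm_add_le _ _).trans ?_
    gcongr
    · rw [norm_mul, norm_neg_one_pow, norm_pow, norm_nat_add_one, one_mul]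
    · rw [norm_mul, norm_neg_one_pow, norm_pow, norm_nat_add_one, one_mul]
  · rw [norm_mul, norm_neg_one_pow, norm_pow, h3, one_mul]

lemma norm_WA_le : ∀ m n : ℕ, ‖WA m n‖ ≤ 6 * (((m : ℝ) + 1) ^ 2 * ((n : ℝ) + 1) ^ 2) := by
  intro m n
  have hm : (0:ℝ) ≤ (m : ℝ) := Nat.cast_nonneg m
  have hn : (0:ℝ) ≤ (n : ℝ) := Nat.cast_nonneg n
  refine (norm_WA_tri m n).trans ?_
  nlinarith [sq_nonneg ((m : ℝ) - (n : ℝ)), sq_nonneg ((m : ℝ) * (n : ℝ)),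
    mul_nonneg hm hn, sq_nonneg ((m : ℝ) + (n : ℝ)), sq_nonneg ((m : ℝ) * (n : ℝ) - 1)]

lemma norm_WA_swap_le : ∀ m n : ℕ, ‖WA n m‖ ≤ 6 * (((m : ℝ) + 1) ^ 2 * ((n : ℝ) + 1) ^ 2) := by
  intro m n
  refine (norm_WA_le n m).trans (le_of_eq ?_)
  ring

lemma norm_W0_shift_le : ∀ m n : ℕ, ‖W0 (m + n + 1) n‖ ≤ 2 * (((m : ℝ) + 1) ^ 1 * ((n : ℝ) + 1) ^ 2) := by
  intro m n
  have hm : (0:ℝ) ≤ (m : ℝ) := Nat.cast_nonneg m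
  have hn : (0:ℝ) ≤ (n : ℝ) := Nat.cast_nonneg n
  rw [norm_W0]
  push_cast
  nlinarith [mul_nonneg hm hn, mul_nonneg (mul_nonneg hm hn) hn]

lemma norm_WA_shift_le : ∀ m n : ℕ,
    ‖WA (m + n + 1) n‖ ≤ 24 * (((m : ℝ) + 1) ^ 2 * ((n : ℝ) + 1) ^ 4) := by
  intro m n
  have hm : (0:ℝ) ≤ (m : ℝ) := Nat.cast_nonneg m
  have hn : (0:ℝ) ≤ (n : ℝ) := Nat.cast_nonneg n
  refine (norm_WA_le (m + n + 1) n).trans ?_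
  push_cast
  have key : ((m : ℝ) + (n : ℝ) + 2) ^ 2 ≤ 4 * (((m : ℝ) + 1) ^ 2 * ((n : ℝ) + 1) ^ 2) := by
    nlinarith [mul_nonneg hm hn, sq_nonneg ((m : ℝ) * (n : ℝ)), sq_nonneg ((m : ℝ) - (n : ℝ))]
  nlinarith [pow_le_pow_left₀ (by positivity) (show ((n:ℝ)+1)^0 ≤ ((n:ℝ)+1)^0 from le_rfl) 0,
    mul_nonneg hm hn, sq_nonneg ((n:ℝ)+1), mul_le_mul_of_nonneg_left key (show (0:ℝ) ≤ ((n:ℝ)+1)^2 by positivity)]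

lemma norm_W0_diag_le : ∀ k : ℕ, ‖W0 k k‖ ≤ 1 * ((k : ℝ) + 1) ^ 2 := by
  intro k
  rw [norm_W0]
  nlinarith [Nat.cast_nonneg (α := ℝ) k]

lemma norm_WA_diag_le : ∀ k : ℕ, ‖WA k k‖ ≤ 6 * ((k : ℝ) + 1) ^ 2 := by
  intro k
  refine (norm_WA_tri k k).trans ?_
  nlinarith [Nat.cast_nonneg (α := ℝ) k]

lemma core {q : ℂ} (hq : ‖q‖ < 1) :
    4 * ∑' p : ℕ × ℕ, W0 p.1 p.2 * Pg q (p.1 + 1) * Pg q (p.2 + 1)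
      = 2 * (∑' k : ℕ, (-1) ^ k * ((k : ℂ) + 1) ^ 2 * Pg q (k + 1) ^ 2)
        - ∑' k : ℕ, (-1) ^ k * ((k : ℂ) + 1) * (k : ℂ) ^ 2 * Pg q (k + 1) := by
  -- summability facts
  have N1 : Summable fun p : ℕ × ℕ => W0 p.1 p.2 * Pg q (p.1 + 1) * Pg q (p.2 + 1) :=
    (summable_PP hq W0 1 1 1 one_pos.le norm_W0_le (fun p => p.1 + 1) (fun p => p.2 + 1)
      (fun p => Nat.succ_ne_zero _) (fun p => Nat.succ_ne_zero _) (fun p => by beta_reduce; omega)).of_norm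
  have N2 : Summable fun p : ℕ × ℕ => WA p.1 p.2 * Pg q (p.1 + 1) * Pg q (p.2 + 1) :=
    (summable_PP hq WA 2 2 6 (by norm_num) norm_WA_le (fun p => p.1 + 1) (fun p => p.2 + 1)
      (fun p => Nat.succ_ne_zero _) (fun p => Nat.succ_ne_zero _) (fun p => by beta_reduce; omega)).of_norm
  have N3 : Summable fun p : ℕ × ℕ =>
      WA (p.1 + p.2 + 1) p.2 * Pg q (p.1 + p.2 + 1 + 1) * Pg q (p.2 + 1) :=
    (summable_PP hq (fun m n => WA (m + n + 1) n) 2 4 24 (by norm_num) norm_WA_shift_le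
      (fun p => p.1 + p.2 + 1 + 1) (fun p => p.2 + 1)
      (fun p => Nat.succ_ne_zero _) (fun p => Nat.succ_ne_zero _) (fun p => by beta_reduce; omega)).of_norm
  have N4 : Summable fun p : ℕ × ℕ =>
      W0 (p.1 + p.2 + 1) p.2 * Pg q (p.1 + p.2 + 1 + 1) * Pg q (p.2 + 1) :=
    (summable_PP hq (fun m n => W0 (m + n + 1) n) 1 2 2 (by norm_num) norm_W0_shift_le
      (fun p => p.1 + p.2 + 1 + 1) (fun p => p.2 + 1)
      (fun p => Nat.succ_ne_zero _) (fun p => Nat.succ_ne_zero _) (fun p => by beta_reduce; omega)).of_norm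
  have N5 : Summable fun p : ℕ × ℕ => WA p.1 p.2 * Pg q (p.1 + p.2 + 2) * Pg q (p.1 + 1) :=
    (summable_PP hq WA 2 2 6 (by norm_num) norm_WA_le (fun p => p.1 + p.2 + 2)
      (fun p => p.1 + 1) (fun p => by beta_reduce; omega) (fun p => Nat.succ_ne_zero _)
      (fun p => by beta_reduce; omega)).of_norm
  have N6 : Summable fun p : ℕ × ℕ => WA p.1 p.2 * Pg q (p.1 + p.2 + 2) * Pg q (p.2 + 1) :=
    (summable_PP hq WA 2 2 6 (by norm_num) norm_WA_le (fun p => p.1 + p.2 + 2)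
      (fun p => p.2 + 1) (fun p => by beta_reduce; omega) (fun p => Nat.succ_ne_zero _)
      (fun p => by beta_reduce; omega)).of_norm
  have N7 : Summable fun p : ℕ × ℕ => WA p.2 p.1 * Pg q (p.1 + p.2 + 2) * Pg q (p.2 + 1) :=
    (summable_PP hq (fun m n => WA n m) 2 2 6 (by norm_num) norm_WA_swap_le
      (fun p => p.1 + p.2 + 2) (fun p => p.2 + 1) (fun p => by beta_reduce; omega)
      (fun p => Nat.succ_ne_zero _) (fun p => by beta_reduce; omega)).of_norm
  have N8 : Summable fun p : ℕ × ℕ => WA p.1 p.2 * Pg q (p.1 + p.2 + 2) :=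
    (summable_Ps hq WA 2 2 6 (by norm_num) norm_WA_le (fun p => p.1 + p.2 + 2)
      (fun p => by beta_reduce; omega) (fun p => by beta_reduce; omega)).of_norm
  have N9 : Summable fun k : ℕ => W0 k k * Pg q (k + 1) ^ 2 :=
    (summable_cPP hq (fun k => W0 k k) 2 1 one_pos.le norm_W0_diag_le).of_norm
  have N10 : Summable fun k : ℕ => WA k k * Pg q (k + 1) ^ 2 :=
    (summable_cPP hq (fun k => WA k k) 2 6 (by norm_num) norm_WA_diag_le).of_norm
  have hcS2 : ∀ k : ℕ, ‖(-1 : ℂ) ^ k * ((k : ℂ) + 1) ^ 2‖ ≤ 1 * ((k : ℝ) + 1) ^ 2 := by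
    intro k
    rw [norm_mul, norm_neg_one_pow, norm_pow, norm_nat_add_one, one_mul]
  have N11 : Summable fun k : ℕ => (-1 : ℂ) ^ k * ((k : ℂ) + 1) ^ 2 * Pg q (k + 1) ^ 2 :=
    (summable_cPP hq (fun k => (-1 : ℂ) ^ k * ((k : ℂ) + 1) ^ 2) 2 1 one_pos.le hcS2).of_norm
  have hcS3 : ∀ k : ℕ, ‖(-1 : ℂ) ^ k * ((k : ℂ) + 1) * (k : ℂ) ^ 2‖ ≤ 1 * ((k : ℝ) + 1) ^ 3 := by
    intro k
    rw [norm_mul, norm_mul, norm_neg_one_pow, norm_nat_add_one, norm_pow, one_mul, one_mul]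
    have h1 : ‖(k : ℂ)‖ = (k : ℝ) := Complex.norm_natCast k
    rw [h1]
    have hk : (0:ℝ) ≤ (k : ℝ) := Nat.cast_nonneg k
    nlinarith [sq_nonneg ((k:ℝ))]
  have N12 : Summable fun k : ℕ => (-1 : ℂ) ^ k * ((k : ℂ) + 1) * (k : ℂ) ^ 2 * Pg q (k + 1) :=
    (summable_cP hq (fun k => (-1 : ℂ) ^ k * ((k : ℂ) + 1) * (k : ℂ) ^ 2) 3 1 one_pos.le hcS3
      (fun k => k + 1) (fun k => Nat.succ_ne_zero _) (fun k => le_rfl)).of_norm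
  -- step h3 : A0 = 2 T0 + D0
  have htri0 : (∑' p : ℕ × ℕ, W0 p.1 p.2 * Pg q (p.1 + 1) * Pg q (p.2 + 1))
      = (∑' p : ℕ × ℕ, W0 (p.1 + p.2 + 1) p.2 * Pg q (p.1 + p.2 + 1 + 1) * Pg q (p.2 + 1))
        + (∑' p : ℕ × ℕ, W0 p.1 (p.1 + p.2 + 1) * Pg q (p.1 + 1) * Pg q (p.1 + p.2 + 1 + 1))
        + ∑' k : ℕ, W0 k k * Pg q (k + 1) * Pg q (k + 1) :=
    tsum_trichotomy N1
  have hsym0 : (∑' p : ℕ × ℕ, W0 p.1 (p.1 + p.2 + 1) * Pg q (p.1 + 1) * Pg q (p.1 + p.2 + 1 + 1))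
      = ∑' p : ℕ × ℕ, W0 (p.1 + p.2 + 1) p.2 * Pg q (p.1 + p.2 + 1 + 1) * Pg q (p.2 + 1) := by
    rw [← (Equiv.prodComm ℕ ℕ).tsum_eq
      (fun p : ℕ × ℕ => W0 p.1 (p.1 + p.2 + 1) * Pg q (p.1 + 1) * Pg q (p.1 + p.2 + 1 + 1))]
    refine tsum_congr fun p => ?_
    show W0 p.2 (p.2 + p.1 + 1) * Pg q (p.2 + 1) * Pg q (p.2 + p.1 + 1 + 1)
      = W0 (p.1 + p.2 + 1) p.2 * Pg q (p.1 + p.2 + 1 + 1) * Pg q (p.2 + 1)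
    rw [W0_symm, Nat.add_comm p.2 p.1]
    ring
  have htri1 : (∑' p : ℕ × ℕ, WA p.1 p.2 * Pg q (p.1 + 1) * Pg q (p.2 + 1))
      = (∑' p : ℕ × ℕ, WA (p.1 + p.2 + 1) p.2 * Pg q (p.1 + p.2 + 1 + 1) * Pg q (p.2 + 1))
        + (∑' p : ℕ × ℕ, WA p.1 (p.1 + p.2 + 1) * Pg q (p.1 + 1) * Pg q (p.1 + p.2 + 1 + 1))
        + ∑' k : ℕ, WA k k * Pg q (k + 1) * Pg q (k + 1) :=
    tsum_trichotomy N2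
  have hsym1 : (∑' p : ℕ × ℕ, WA p.1 (p.1 + p.2 + 1) * Pg q (p.1 + 1) * Pg q (p.1 + p.2 + 1 + 1))
      = ∑' p : ℕ × ℕ, WA (p.1 + p.2 + 1) p.2 * Pg q (p.1 + p.2 + 1 + 1) * Pg q (p.2 + 1) := by
    rw [← (Equiv.prodComm ℕ ℕ).tsum_eq
      (fun p : ℕ × ℕ => WA p.1 (p.1 + p.2 + 1) * Pg q (p.1 + 1) * Pg q (p.1 + p.2 + 1 + 1))]
    refine tsum_congr fun p => ?_
    show WA p.2 (p.2 + p.1 + 1) * Pg q (p.2 + 1) * Pg q (p.2 + p.1 + 1 + 1)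
      = WA (p.1 + p.2 + 1) p.2 * Pg q (p.1 + p.2 + 1 + 1) * Pg q (p.2 + 1)
    rw [WA_symm, Nat.add_comm p.2 p.1]
    ring
  -- g-identity split
  have hgid : (∑' p : ℕ × ℕ, WA p.1 p.2 * Pg q (p.1 + 1) * Pg q (p.2 + 1))
      = (∑' p : ℕ × ℕ, WA p.1 p.2 * Pg q (p.1 + p.2 + 2))
        + (∑' p : ℕ × ℕ, WA p.1 p.2 * Pg q (p.1 + p.2 + 2) * Pg q (p.1 + 1))
        + ∑' p : ℕ × ℕ, WA p.1 p.2 * Pg q (p.1 + p.2 + 2) * Pg q (p.2 + 1) := by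
    rw [← Summable.tsum_add N8 N5, ← Summable.tsum_add (N8.add N5) N6]
    refine tsum_congr fun p => ?_
    rw [mul_assoc, Pg_mul hq p.1 p.2]
    ring
  have hswapX : (∑' p : ℕ × ℕ, WA p.1 p.2 * Pg q (p.1 + p.2 + 2) * Pg q (p.1 + 1))
      = ∑' p : ℕ × ℕ, WA p.2 p.1 * Pg q (p.1 + p.2 + 2) * Pg q (p.2 + 1) := by
    rw [← (Equiv.prodComm ℕ ℕ).tsum_eq
      (fun p : ℕ × ℕ => WA p.1 p.2 * Pg q (p.1 + p.2 + 2) * Pg q (p.1 + 1))]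
    refine tsum_congr fun p => ?_
    show WA p.2 p.1 * Pg q (p.2 + p.1 + 2) * Pg q (p.2 + 1)
      = WA p.2 p.1 * Pg q (p.1 + p.2 + 2) * Pg q (p.2 + 1)
    rw [Nat.add_comm p.2 p.1]
  have hswapX2 : (∑' p : ℕ × ℕ, WA p.1 p.2 * Pg q (p.1 + p.2 + 2) * Pg q (p.2 + 1))
      = ∑' p : ℕ × ℕ, WA p.1 p.2 * Pg q (p.1 + p.2 + 2) * Pg q (p.1 + 1) := by
    rw [← (Equiv.prodComm ℕ ℕ).tsum_eq
      (fun p : ℕ × ℕ => WA p.1 p.2 * Pg q (p.1 + p.2 + 2) * Pg q (p.2 + 1))]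
    refine tsum_congr fun p => ?_
    show WA p.2 p.1 * Pg q (p.2 + p.1 + 2) * Pg q (p.1 + 1)
      = WA p.1 p.2 * Pg q (p.1 + p.2 + 2) * Pg q (p.1 + 1)
    rw [WA_symm, Nat.add_comm p.2 p.1]
  -- key pointwise difference
  have hdiff : (∑' p : ℕ × ℕ, WA (p.1 + p.2 + 1) p.2 * Pg q (p.1 + p.2 + 1 + 1) * Pg q (p.2 + 1))
      - (∑' p : ℕ × ℕ, WA p.2 p.1 * Pg q (p.1 + p.2 + 2) * Pg q (p.2 + 1))
      = 4 * ∑' p : ℕ × ℕ, W0 (p.1 + p.2 + 1) p.2 * Pg q (p.1 + p.2 + 1 + 1) * Pg q (p.2 + 1) := by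
    rw [← Summable.tsum_sub N3 N7, ← tsum_mul_left]
    refine tsum_congr fun p => ?_
    have hk := WA_key p.1 p.2
    rw [Nat.add_comm p.2 p.1] at hk
    have h12 : p.1 + p.2 + 1 + 1 = p.1 + p.2 + 2 := rfl
    rw [h12]
    linear_combination (Pg q (p.1 + p.2 + 2) * Pg q (p.2 + 1)) * hk
  -- diagonal combination
  have hdiag : 4 * (∑' k : ℕ, W0 k k * Pg q (k + 1) * Pg q (k + 1))
      - (∑' k : ℕ, WA k k * Pg q (k + 1) * Pg q (k + 1))
      = 2 * ∑' k : ℕ, (-1) ^ k * ((k : ℂ) + 1) ^ 2 * Pg q (k + 1) ^ 2 := by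
    have N9' : Summable fun k : ℕ => W0 k k * Pg q (k + 1) * Pg q (k + 1) := by
      refine N9.congr fun k => ?_
      ring
    have N10' : Summable fun k : ℕ => WA k k * Pg q (k + 1) * Pg q (k + 1) := by
      refine N10.congr fun k => ?_
      ring
    rw [← tsum_mul_left, ← Summable.tsum_sub (N9'.mul_left 4) N10', ← tsum_mul_left]
    refine tsum_congr fun k => ?_
    have hk := W_diag k
    linear_combination (Pg q (k + 1) * Pg q (k + 1)) * hk
  -- Psi evaluation
  have hpsi : (∑' p : ℕ × ℕ, WA p.1 p.2 * Pg q (p.1 + p.2 + 2))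
      = ∑' s : ℕ, (-1) ^ s * ((s : ℂ) + 1) ^ 2 * ((s : ℂ) + 2) * Pg q (s + 2) := by
    rw [tsum_group N8]
    refine tsum_congr fun s => ?_
    have hrow : ∑ i ∈ Finset.range (s + 1), WA i (s - i) * Pg q (i + (s - i) + 2)
        = ∑ i ∈ Finset.range (s + 1), WA i (s - i) * Pg q (s + 2) := by
      refine Finset.sum_congr rfl fun i hi => ?_
      have hi' : i ≤ s := by simpa [Nat.lt_succ_iff] using hi
      rw [show i + (s - i) + 2 = s + 2 by omega]
    rw [hrow, ← Finset.sum_mul, WA_row]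
  -- S3 shift
  have hshift : (∑' k : ℕ, (-1) ^ k * ((k : ℂ) + 1) * (k : ℂ) ^ 2 * Pg q (k + 1))
      = -∑' s : ℕ, (-1) ^ s * ((s : ℂ) + 1) ^ 2 * ((s : ℂ) + 2) * Pg q (s + 2) := by
    rw [Summable.tsum_eq_zero_add N12, ← tsum_neg]
    push_cast
    rw [show ((-1 : ℂ)) ^ (0 : ℕ) * ((0 : ℂ) + 1) * (0 : ℂ) ^ 2 * Pg q (0 + 1) = 0 by ring]
    rw [zero_add]
    refine tsum_congr fun s => ?_
    push_cast
    rw [show s + 1 + 1 = s + 2 from rfl]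
    simp only [pow_succ]
    ring
  linear_combination 4 * htri0 + 4 * hsym0 - htri1 - hsym1 + hgid + 2 * hswapX + hswapX2
    - 2 * hdiff + hdiag + hpsi + hshift

lemma summable_u {r : ℝ} (hr0 : 0 ≤ r) (hr1 : r < 1) :
    Summable (fun n : ℕ => ((n : ℝ) + 1) ^ 2 * r ^ n) := by
  have h : ‖r‖ < 1 := by rwa [Real.norm_eq_abs, _root_.abs_of_nonneg hr0]
  have h0 := summable_pow_mul_geometric_of_norm_lt_one 2 h
  have h1 := summable_pow_mul_geometric_of_norm_lt_one 1 h
  have h2 := summable_pow_mul_geometric_of_norm_lt_one 0 h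
  refine ((h0.add (h1.mul_left 2)).add h2).congr fun n => ?_
  push_cast
  ring

theorem mP_deriv' (q : ℂ) (hq : ‖q‖ < 1) :
    q * deriv mP q = (mP q ^ 2 - mQ q) / 4 := by
  -- the derivative of mP
  set r' : ℝ := (1 + ‖q‖) / 2 with hr'
  have hr'1 : r' < 1 := by rw [hr']; linarith
  have hr'0 : (0:ℝ) < r' := by rw [hr']; positivity
  have hqr' : ‖q‖ < r' := by rw [hr']; linarith
  have hderiv : HasDerivAt (fun z : ℂ => ∑' n : ℕ,
        (-1) ^ n * ((n : ℂ) + 1) * z ^ (n + 1) / (1 - z ^ (n + 1)))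
      (∑' n : ℕ, (-1) ^ n * ((n : ℂ) + 1) ^ 2 * q ^ n / (1 - q ^ (n + 1)) ^ 2) q := by
    refine hasDerivAt_tsum_of_isPreconnected
      (u := fun n : ℕ => ((n : ℝ) + 1) ^ 2 * r' ^ n / (1 - r') ^ 2)
      (g := fun (n : ℕ) (z : ℂ) => (-1) ^ n * ((n : ℂ) + 1) * z ^ (n + 1) / (1 - z ^ (n + 1)))
      (g' := fun (n : ℕ) (y : ℂ) => (-1) ^ n * ((n : ℂ) + 1) ^ 2 * y ^ n / (1 - y ^ (n + 1)) ^ 2)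
      ((summable_u hr'0.le hr'1).div_const _) Metric.isOpen_ball
      (convex_ball (0:ℂ) r').isPreconnected ?_ ?_ (Metric.mem_ball_self hr'0) ?_ ?_
    · intro n y hy
      have hy1 : ‖y‖ < 1 := by
        have : dist y 0 < r' := Metric.mem_ball.mp hy
        rw [dist_zero_right] at this
        linarith
      have hne : 1 - y ^ (n + 1) ≠ 0 := one_sub_pow_ne hy1 (Nat.succ_ne_zero n)
      have h1 : HasDerivAt (fun z : ℂ => (-1) ^ n * ((n : ℂ) + 1) * z ^ (n + 1))
          ((-1) ^ n * ((n : ℂ) + 1) * (((n : ℂ) + 1) * y ^ n)) y := by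
        have := (hasDerivAt_pow (n + 1) y).const_mul ((-1 : ℂ) ^ n * ((n : ℂ) + 1))
        refine this.congr_deriv ?_
        simp only [Nat.add_sub_cancel]
        push_cast
        try ring
      have h2 : HasDerivAt (fun z : ℂ => 1 - z ^ (n + 1)) (-(((n : ℂ) + 1) * y ^ n)) y := by
        have := (hasDerivAt_pow (n + 1) y).const_sub (1 : ℂ)
        refine this.congr_deriv ?_
        simp only [Nat.add_sub_cancel]
        push_cast
        try ring
      have h3 := h1.div h2 hne
      refine h3.congr_deriv ?_
      field_simp
      ring
    · intro n y hy
      have hyr : ‖y‖ ≤ r' := by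
        have : dist y 0 < r' := Metric.mem_ball.mp hy
        rw [dist_zero_right] at this
        linarith
      have hy1 : ‖y‖ < 1 := lt_of_le_of_lt hyr hr'1
      have hd : 1 - r' ≤ ‖1 - y ^ (n + 1)‖ := by
        have := norm_one_sub_pow_ge hy1 (Nat.succ_ne_zero n)
        linarith
      have hnum : ‖(-1 : ℂ) ^ n * ((n : ℂ) + 1) ^ 2 * y ^ n‖ ≤ ((n : ℝ) + 1) ^ 2 * r' ^ n := by
        rw [norm_mul, norm_mul, norm_neg_one_pow, norm_pow, norm_nat_add_one, norm_pow, one_mul]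
        gcongr
        try exact norm_nonneg y
      rw [norm_div, norm_pow]
      refine div_le_div₀ (by positivity) hnum (by nlinarith) ?_
      have h1r : (0:ℝ) ≤ 1 - r' := by linarith
      calc (1 - r') ^ 2 ≤ ‖1 - y ^ (n + 1)‖ ^ 2 := by gcongr
        _ = ‖1 - y ^ (n + 1)‖ ^ 2 := rfl
    · refine summable_zero.congr fun n => ?_
      simp [zero_pow (Nat.succ_ne_zero n)]
    · rw [Metric.mem_ball, dist_zero_right]
      exact hqr'
  have hmPd : HasDerivAt mP (8 * ∑' n : ℕ,
      (-1) ^ n * ((n : ℂ) + 1) ^ 2 * q ^ n / (1 - q ^ (n + 1)) ^ 2) q := by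
    have h8 := (hderiv.const_mul (8 : ℂ)).const_add 1
    exact h8
  have hd1 : deriv mP q = 8 * ∑' n : ℕ,
      (-1) ^ n * ((n : ℂ) + 1) ^ 2 * q ^ n / (1 - q ^ (n + 1)) ^ 2 := hmPd.deriv
  -- summability of the basic one-variable series
  have hc1 : ∀ k : ℕ, ‖(-1 : ℂ) ^ k * ((k : ℂ) + 1)‖ ≤ 1 * ((k : ℝ) + 1) ^ 1 := by
    intro k
    rw [norm_mul, norm_neg_one_pow, norm_nat_add_one, one_mul, pow_one, one_mul]
  have hc2 : ∀ k : ℕ, ‖(-1 : ℂ) ^ k * ((k : ℂ) + 1) ^ 2‖ ≤ 1 * ((k : ℝ) + 1) ^ 2 := by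
    intro k
    rw [norm_mul, norm_neg_one_pow, norm_pow, norm_nat_add_one, one_mul]
  have hc3 : ∀ k : ℕ, ‖(-1 : ℂ) ^ k * ((k : ℂ) + 1) ^ 3‖ ≤ 1 * ((k : ℝ) + 1) ^ 3 := by
    intro k
    rw [norm_mul, norm_neg_one_pow, norm_pow, norm_nat_add_one, one_mul]
  have hcS3 : ∀ k : ℕ, ‖(-1 : ℂ) ^ k * ((k : ℂ) + 1) * (k : ℂ) ^ 2‖ ≤ 1 * ((k : ℝ) + 1) ^ 3 := by
    intro k
    rw [norm_mul, norm_mul, norm_neg_one_pow, norm_nat_add_one, norm_pow, one_mul, one_mul,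
      Complex.norm_natCast]
    have hk : (0:ℝ) ≤ (k : ℝ) := Nat.cast_nonneg k
    nlinarith [sq_nonneg ((k:ℝ))]
  have Nf0n : Summable fun k : ℕ => ‖(-1 : ℂ) ^ k * ((k : ℂ) + 1) * Pg q (k + 1)‖ :=
    summable_cP hq (fun k => (-1 : ℂ) ^ k * ((k : ℂ) + 1)) 1 1 one_pos.le hc1
      (fun k => k + 1) (fun k => Nat.succ_ne_zero _) (fun k => le_rfl)
  have Nf0 : Summable fun k : ℕ => (-1 : ℂ) ^ k * ((k : ℂ) + 1) * Pg q (k + 1) := Nf0n.of_norm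
  have NS1 : Summable fun k : ℕ => (-1 : ℂ) ^ k * ((k : ℂ) + 1) ^ 2 * Pg q (k + 1) :=
    (summable_cP hq (fun k => (-1 : ℂ) ^ k * ((k : ℂ) + 1) ^ 2) 2 1 one_pos.le hc2
      (fun k => k + 1) (fun k => Nat.succ_ne_zero _) (fun k => le_rfl)).of_norm
  have NS2 : Summable fun k : ℕ => (-1 : ℂ) ^ k * ((k : ℂ) + 1) ^ 2 * Pg q (k + 1) ^ 2 :=
    (summable_cPP hq (fun k => (-1 : ℂ) ^ k * ((k : ℂ) + 1) ^ 2) 2 1 one_pos.le hc2).of_norm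
  have Ng3 : Summable fun k : ℕ => (-1 : ℂ) ^ k * ((k : ℂ) + 1) ^ 3 * Pg q (k + 1) :=
    (summable_cP hq (fun k => (-1 : ℂ) ^ k * ((k : ℂ) + 1) ^ 3) 3 1 one_pos.le hc3
      (fun k => k + 1) (fun k => Nat.succ_ne_zero _) (fun k => le_rfl)).of_norm
  have NS3 : Summable fun k : ℕ => (-1 : ℂ) ^ k * ((k : ℂ) + 1) * (k : ℂ) ^ 2 * Pg q (k + 1) :=
    (summable_cP hq (fun k => (-1 : ℂ) ^ k * ((k : ℂ) + 1) * (k : ℂ) ^ 2) 3 1 one_pos.le hcS3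
      (fun k => k + 1) (fun k => Nat.succ_ne_zero _) (fun k => le_rfl)).of_norm
  -- rewrite mP and mQ
  have hmP : mP q = 1 + 8 * ∑' n : ℕ, (-1) ^ n * ((n : ℂ) + 1) * Pg q (n + 1) := by
    have h : (∑' n : ℕ, (-1) ^ n * ((n : ℂ) + 1) * q ^ (n + 1) / (1 - q ^ (n + 1)))
        = ∑' n : ℕ, (-1) ^ n * ((n : ℂ) + 1) * Pg q (n + 1) :=
      tsum_congr fun n => by rw [Pg, mul_div_assoc]
    rw [mP, h]
  have hmQ : mQ q = 1 - 16 * ∑' n : ℕ, (-1) ^ n * ((n : ℂ) + 1) ^ 3 * Pg q (n + 1) := by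
    have h : (∑' n : ℕ, (-1) ^ n * ((n : ℂ) + 1) ^ 3 * q ^ (n + 1) / (1 - q ^ (n + 1)))
        = ∑' n : ℕ, (-1) ^ n * ((n : ℂ) + 1) ^ 3 * Pg q (n + 1) :=
      tsum_congr fun n => by rw [Pg, mul_div_assoc]
    rw [mQ, h]
  -- q * deriv mP q = 8 * (S1 + S2)
  have hqd : q * deriv mP q
      = 8 * ((∑' k : ℕ, (-1) ^ k * ((k : ℂ) + 1) ^ 2 * Pg q (k + 1))
          + ∑' k : ℕ, (-1) ^ k * ((k : ℂ) + 1) ^ 2 * Pg q (k + 1) ^ 2) := by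
    rw [hd1, ← Summable.tsum_add NS1 NS2]
    rw [show q * (8 * ∑' n : ℕ, (-1) ^ n * ((n : ℂ) + 1) ^ 2 * q ^ n / (1 - q ^ (n + 1)) ^ 2)
        = 8 * ∑' n : ℕ, q * ((-1) ^ n * ((n : ℂ) + 1) ^ 2 * q ^ n / (1 - q ^ (n + 1)) ^ 2) by
      rw [tsum_mul_left]; ring]
    congr 1
    refine tsum_congr fun n => ?_
    have hs := Pg_sq hq (Nat.succ_ne_zero n)
    have : q * ((-1) ^ n * ((n : ℂ) + 1) ^ 2 * q ^ n / (1 - q ^ (n + 1)) ^ 2)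
        = ((-1) ^ n * ((n : ℂ) + 1) ^ 2) * (q ^ (n + 1) / (1 - q ^ (n + 1)) ^ 2) := by
      rw [pow_succ]
      ring
    rw [this, ← hs]
    ring
  -- f0 * f0 = A0
  have hff : (∑' n : ℕ, (-1) ^ n * ((n : ℂ) + 1) * Pg q (n + 1))
        * (∑' n : ℕ, (-1) ^ n * ((n : ℂ) + 1) * Pg q (n + 1))
      = ∑' p : ℕ × ℕ, W0 p.1 p.2 * Pg q (p.1 + 1) * Pg q (p.2 + 1) := by
    rw [tsum_mul_tsum_of_summable_norm Nf0n Nf0n]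
    refine tsum_congr fun p => ?_
    simp only [W0, pow_add]
    ring
  -- linear relation among the single sums
  have hlin : 8 * (∑' k : ℕ, (-1) ^ k * ((k : ℂ) + 1) ^ 2 * Pg q (k + 1))
        - 4 * (∑' k : ℕ, (-1) ^ k * ((k : ℂ) + 1) * Pg q (k + 1))
        - 4 * (∑' k : ℕ, (-1) ^ k * ((k : ℂ) + 1) ^ 3 * Pg q (k + 1))
      = -4 * ∑' k : ℕ, (-1) ^ k * ((k : ℂ) + 1) * (k : ℂ) ^ 2 * Pg q (k + 1) := by
    rw [← tsum_mul_left, ← tsum_mul_left, ← tsum_mul_left, ← tsum_mul_left,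
      ← Summable.tsum_sub (NS1.mul_left 8) (Nf0.mul_left 4),
      ← Summable.tsum_sub ((NS1.mul_left 8).sub (Nf0.mul_left 4)) (Ng3.mul_left 4)]
    refine tsum_congr fun k => ?_
    ring
  have hcore := core hq
  rw [hmP, hmQ, hqd]
  linear_combination hlin - 16 * hff - 4 * hcore


/-- For `|q| < 1`, one has `q·𝒫′(q) = (𝒫(q)² − 𝒬(q))/4`. -/
theorem mP_deriv (q : ℂ) (hq : ‖q‖ < 1) :
    q * deriv mP q = (mP q ^ 2 - mQ q) / 4 :=
  mP_deriv' q hq
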